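/- Let X be a metric space, f : X → X a map, and C > 0 such that |d_X(f(x), f(y)) − d_X(x,y)| < C for all x, y ∈ X. Then d(x, y') := inf_{u ∈ X} [d_X(x,u) + C + d_X(f(u), y)] (for x in the first copy and y' in the second copy of X), together with d_X on each copy, defines a metric on the double X ⊔ X'. -/
import Mathlib


/-- A function `d : α → α → ℝ` is a metric. -/
def IsMetric {α : Type*} (d : α → α → ℝ) : Prop :=
  (∀ p q, d p q = 0 ↔ p = q) ∧ (∀ p q, d p q = d q p) ∧ ∀ p q r, d p r ≤ d p q + d q r

/-- The distance on the double `X ⊔ X'` built from a map `f : X → X` and `C > 0`: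
`d_X` within each copy, and `d(x, y') = inf_u [d_X(x,u) + C + d_X(f u, y)]` between
the copies. -/
noncomputable def Dbl {X : Type*} [MetricSpace X] (f : X → X) (C : ℝ) :
    X ⊕ X → X ⊕ X → ℝ
  | Sum.inl x, Sum.inl y => dist x y
  | Sum.inr x, Sum.inr y => dist x y
  | Sum.inl x, Sum.inr y => ⨅ u : X, dist x u + C + dist (f u) y
  | Sum.inr y, Sum.inl x => ⨅ u : X, dist x u + C + dist (f u) y

section Aux
variable {X : Type*} [MetricSpace X] [Nonempty X]

private lemma dbl_bdd (f : X → X) {C : ℝ} (hC : 0 < C) (x y : X) :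
    BddBelow (Set.range fun u => dist x u + C + dist (f u) y) := by
  refine ⟨C, ?_⟩
  rintro _ ⟨u, rfl⟩
  have h1 := dist_nonneg (x := x) (y := u)
  have h2 := dist_nonneg (x := f u) (y := y)
  dsimp only
  linarith

private lemma C_le_dbl (f : X → X) {C : ℝ} (hC : 0 < C) (x y : X) :
    C ≤ ⨅ u : X, dist x u + C + dist (f u) y := by
  refine le_ciInf fun u => ?_
  have h1 := dist_nonneg (x := x) (y := u)
  have h2 := dist_nonneg (x := f u) (y := y)
  linarith

private lemma le_inf_add_inf {A B : X → ℝ} {a : ℝ} (h : ∀ u v, a ≤ A u + B v) :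
    a ≤ (⨅ u, A u) + ⨅ v, B v := by
  rw [← sub_le_iff_le_add]
  refine le_ciInf fun u => ?_
  rw [sub_le_comm]
  refine le_ciInf fun v => ?_
  have := h u v
  linarith

end Aux

/-- if `|d_X(f x, f y) - d_X(x, y)| < C` for all `x, y`, then `Dbl f C`
is a metric on the double of `X`, with mixed distances bounded below by `C`. -/
theorem stmt10 {X : Type*} [MetricSpace X] [Nonempty X] (f : X → X) (C : ℝ) (hC : 0 < C)
    (hf : ∀ x y : X, |dist (f x) (f y) - dist x y| < C) :
    IsMetric (Dbl f C) ∧ ∀ x y : X, C ≤ Dbl f C (Sum.inl x) (Sum.inr y) := by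
  have hbdd := dbl_bdd (X := X) f hC
  have hCle := C_le_dbl (X := X) f hC
  have hf1 : ∀ u v : X, dist u v ≤ dist (f u) (f v) + C := fun u v => by
    have h := abs_lt.1 (hf u v); linarith [h.1]
  have hf2 : ∀ u v : X, dist (f u) (f v) ≤ dist u v + C := fun u v => by
    have h := abs_lt.1 (hf u v); linarith [h.2]
  refine ⟨⟨?_, ?_, ?_⟩, fun x y => hCle x y⟩
  · rintro (x|x) (y|y) <;> simp only [Dbl]
    · simp [dist_eq_zero]
    · constructor
      · intro h; exfalso; have := hCle x y; rw [h] at this; linarith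
      · rintro ⟨⟩
    · constructor
      · intro h; exfalso; have := hCle y x; rw [h] at this; linarith
      · rintro ⟨⟩
    · simp [dist_eq_zero]
  · rintro (x|x) (y|y) <;> simp only [Dbl] <;> exact dist_comm x y
  · rintro (x|x) (y|y) (z|z) <;> simp only [Dbl]
    · exact dist_triangle x y z
    · -- D x z ≤ dist x y + D y z
      rw [← sub_le_iff_le_add']
      refine le_ciInf fun u => ?_
      rw [sub_le_iff_le_add']
      refine (ciInf_le (hbdd x z) u).trans ?_
      have := dist_triangle x y u
      linarith
    · -- dist x z ≤ D x y + D z y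
      refine le_inf_add_inf (X := X) fun u v => ?_
      have h1 := dist_triangle4 x u v z
      have h2 := hf1 u v
      have h3 := dist_triangle (f u) y (f v)
      have h4 := dist_comm (f v) y
      have h5 := dist_nonneg (x := z) (y := v)
      have h6 := dist_comm z v
      linarith
    · -- D x z ≤ D x y + dist y z
      rw [← sub_le_iff_le_add]
      refine le_ciInf fun u => ?_
      rw [sub_le_iff_le_add]
      refine (ciInf_le (hbdd x z) u).trans ?_
      have := dist_triangle (f u) y z
      linarith
    · -- D z x ≤ D y x + dist y z  (p = inr x, q = inl y, r = inl z)
      rw [← sub_le_iff_le_add]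
      refine le_ciInf fun u => ?_
      rw [sub_le_iff_le_add]
      refine (ciInf_le (hbdd z x) u).trans ?_
      have := dist_triangle z y u
      have := dist_comm y z
      linarith
    · -- dist x z ≤ D y x + D y z  (p = inr x, q = inl y, r = inr z)
      refine le_inf_add_inf (X := X) fun u v => ?_
      have h1 := dist_triangle4 x (f u) (f v) z
      have h2 := hf2 u v
      have h3 := dist_triangle u y v
      have h4 := dist_comm (f u) x
      have h5 := dist_comm u y
      have h6 := dist_comm y v
      linarith
    · -- D z x ≤ dist x y + D z y  (p = inr x, q = inr y, r = inl z)
      rw [← sub_le_iff_le_add']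
      refine le_ciInf fun u => ?_
      rw [sub_le_iff_le_add']
      refine (ciInf_le (hbdd z x) u).trans ?_
      have := dist_triangle (f u) y x
      have := dist_comm y x
      linarith
    · exact dist_triangle x y z
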